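/- Let H be a complex Hilbert space and let Y be a normed space which is continuously and densely embedded into H. Let T, S : Y → Y be bounded linear operators such that (T y₁, y₂)_H = (y₁, S y₂)_H for all y₁, y₂ ∈ Y. Then T extends to a bounded linear operator T̂ on H, and ‖T̂‖_{H→H} ≤ ‖T‖_{Y→Y}^{1/2} · ‖S‖_{Y→Y}^{1/2}. -/

import Mathlib

open scoped InnerProductSpace

section Aux

variable {H Y : Type*}
    [NormedAddCommGroup H] [InnerProductSpace ℂ H] [CompleteSpace H]
    [NormedAddCommGroup Y] [NormedSpace ℂ Y]

/-- The iterated sequence `y, T y, S T y, T S T y, ...`. -/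
private def kreinSeq (T S : Y →L[ℂ] Y) (y : Y) : ℕ → Y
  | 0 => y
  | (n + 1) => if Even n then T (kreinSeq T S y n) else S (kreinSeq T S y n)

private lemma kreinSeq_even (T S : Y →L[ℂ] Y) (y : Y) {n : ℕ} (hn : Even n) :
    kreinSeq T S y (n + 1) = T (kreinSeq T S y n) := by
  simp [kreinSeq, hn]

private lemma kreinSeq_odd (T S : Y →L[ℂ] Y) (y : Y) {n : ℕ} (hn : ¬ Even n) :
    kreinSeq T S y (n + 1) = S (kreinSeq T S y n) := by
  simp [kreinSeq, hn]

/-- Growth bound along even indices. -/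
private lemma kreinSeq_norm_le (T S : Y →L[ℂ] Y) (y : Y) (k : ℕ) :
    ‖kreinSeq T S y (2 * k)‖ ≤ (‖T‖ * ‖S‖) ^ k * ‖y‖ := by
  induction k with
  | zero => simp [kreinSeq]
  | succ k ih =>
    have h2k : Even (2 * k) := even_two_mul k
    have h2k1 : ¬ Even (2 * k + 1) := by simp [Nat.even_add_one, h2k]
    have e1 : kreinSeq T S y (2 * (k + 1)) = S (T (kreinSeq T S y (2 * k))) := by
      have : 2 * (k + 1) = (2 * k + 1) + 1 := by ring
      rw [this, kreinSeq_odd T S y h2k1, kreinSeq_even T S y h2k]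
    rw [e1]
    calc ‖S (T (kreinSeq T S y (2 * k)))‖ ≤ ‖S‖ * ‖T (kreinSeq T S y (2*k))‖ := S.le_opNorm _
      _ ≤ ‖S‖ * (‖T‖ * ‖kreinSeq T S y (2*k)‖) :=
          mul_le_mul_of_nonneg_left (T.le_opNorm _) (norm_nonneg _)
      _ ≤ ‖S‖ * (‖T‖ * ((‖T‖ * ‖S‖) ^ k * ‖y‖)) := by
          have := mul_le_mul_of_nonneg_left ih (norm_nonneg T)
          exact mul_le_mul_of_nonneg_left this (norm_nonneg S)
      _ = (‖T‖ * ‖S‖) ^ (k + 1) * ‖y‖ := by ring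

end Aux

theorem krein_lemma {H Y : Type*}
    [NormedAddCommGroup H] [InnerProductSpace ℂ H] [CompleteSpace H]
    [NormedAddCommGroup Y] [NormedSpace ℂ Y]
    (ι : Y →L[ℂ] H) (hinj : Function.Injective ι) (hdense : DenseRange ι)
    (T S : Y →L[ℂ] Y)
    (h : ∀ y₁ y₂ : Y, ⟪ι (T y₁), ι y₂⟫_ℂ = ⟪ι y₁, ι (S y₂)⟫_ℂ) :
    ∃ Thatn : H →L[ℂ] H,
      (∀ y : Y, Thatn (ι y) = ι (T y)) ∧
      ‖Thatn‖ ≤ Real.sqrt ‖T‖ * Real.sqrt ‖S‖ := by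
  classical
  set C : ℝ := Real.sqrt ‖T‖ * Real.sqrt ‖S‖ with hC
  have hC0 : 0 ≤ C := mul_nonneg (Real.sqrt_nonneg _) (Real.sqrt_nonneg _)
  have hCsq : C ^ 2 = ‖T‖ * ‖S‖ := by
    rw [hC, mul_pow, Real.sq_sqrt (norm_nonneg T), Real.sq_sqrt (norm_nonneg S)]
  -- derived adjoint relation for S
  have h' : ∀ a b : Y, ⟪ι (S b), ι a⟫_ℂ = ⟪ι b, ι (T a)⟫_ℂ := by
    intro a b
    have := congrArg (starRingEnd ℂ) (h a b)
    rw [inner_conj_symm, inner_conj_symm] at this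
    exact this.symm
  -- pointwise bound
  have key : ∀ y : Y, ‖ι (T y)‖ ≤ C * ‖ι y‖ := by
    intro y
    set a : ℕ → ℝ := fun n => ‖ι (kreinSeq T S y n)‖ with ha
    have ha0 : a 0 = ‖ι y‖ := rfl
    have ha1 : a 1 = ‖ι (T y)‖ := by
      simp [ha, kreinSeq_even T S y (Even.zero), kreinSeq]
    -- log-convexity
    have hconv : ∀ n : ℕ, a (n + 1) ^ 2 ≤ a n * a (n + 2) := by
      intro n
      have key_inner : ⟪ι (kreinSeq T S y (n+1)), ι (kreinSeq T S y (n+1))⟫_ℂ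
          = ⟪ι (kreinSeq T S y n), ι (kreinSeq T S y (n+2))⟫_ℂ := by
        by_cases hn : Even n
        · have hn1 : ¬ Even (n + 1) := by simp [Nat.even_add_one, hn]
          rw [show n + 2 = (n+1)+1 from rfl, kreinSeq_odd T S y hn1]
          nth_rewrite 1 [kreinSeq_even T S y hn]
          exact h _ _
        · have hn1 : Even (n + 1) := Nat.even_add_one.mpr hn
          rw [show n + 2 = (n+1)+1 from rfl, kreinSeq_even T S y hn1]
          nth_rewrite 1 [kreinSeq_odd T S y hn]
          exact h' _ _
      have e1 : (a (n+1) : ℝ) ^ 2 = ‖⟪ι (kreinSeq T S y (n+1)), ι (kreinSeq T S y (n+1))⟫_ℂ‖ := by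
        rw [inner_self_eq_norm_sq_to_K]
        simp [ha]
      rw [e1, key_inner]
      exact norm_inner_le_norm _ _
    by_cases h1 : a 1 = 0
    · rw [← ha1] at *
      rw [h1]
      positivity
    have h1pos : 0 < a 1 := lt_of_le_of_ne (norm_nonneg _) (Ne.symm h1)
    -- positivity of all terms
    have hpos : ∀ n, 0 < a n ∧ 0 < a (n + 1) := by
      intro n
      induction n with
      | zero =>
        constructor
        · by_contra h0
          have ha00 : a 0 = 0 := le_antisymm (not_lt.mp h0) (norm_nonneg _)
          have := hconv 0
          rw [ha00, zero_mul] at this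
          nlinarith [h1pos]
        · exact h1pos
      | succ n ih =>
        refine ⟨ih.2, ?_⟩
        have := hconv n
        nlinarith [ih.1, ih.2, norm_nonneg (ι (kreinSeq T S y (n+2)))]
    -- `a 1 * a n ≤ a 0 * a (n+1)`
    have hQ : ∀ n : ℕ, a 1 * a n ≤ a 0 * a (n + 1) := by
      intro n
      induction n with
      | zero => rw [mul_comm]
      | succ n ih =>
        have hn := (hpos n).1
        have h2 := hconv n
        have : a 1 * (a n * a (n+1)) ≤ a 0 * (a n * a (n+2)) := by
          calc a 1 * (a n * a (n+1)) = (a 1 * a n) * a (n+1) := by ring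
            _ ≤ (a 0 * a (n+1)) * a (n+1) :=
                mul_le_mul_of_nonneg_right ih (norm_nonneg _)
            _ = a 0 * (a (n+1))^2 := by ring
            _ ≤ a 0 * (a n * a (n+2)) := mul_le_mul_of_nonneg_left h2 (norm_nonneg _)
        have := (mul_le_mul_iff_right₀ hn).mp (by linarith [this] : a n * (a 1 * a (n+1)) ≤ a n * (a 0 * a (n+2)))
        linarith
    -- `a 1 ^ n * a 0 ≤ a 0 ^ n * a n`
    have hR : ∀ n : ℕ, a 1 ^ n * a 0 ≤ a 0 ^ n * a n := by
      intro n
      induction n with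
      | zero => simp
      | succ n ih =>
        calc a 1 ^ (n+1) * a 0 = a 1 * (a 1 ^ n * a 0) := by ring
          _ ≤ a 1 * (a 0 ^ n * a n) := mul_le_mul_of_nonneg_left ih (le_of_lt h1pos)
          _ = a 0 ^ n * (a 1 * a n) := by ring
          _ ≤ a 0 ^ n * (a 0 * a (n+1)) := by
              refine mul_le_mul_of_nonneg_left (hQ n) ?_
              positivity
          _ = a 0 ^ (n+1) * a (n+1) := by ring
    have ha0pos : 0 < a 0 := (hpos 0).1
    -- combine with growth bound
    have hmain : ∀ k : ℕ, a 1 ^ (2 * k) * a 0 ≤ (a 0 * C) ^ (2 * k) * (‖ι‖ * ‖y‖) := by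
      intro k
      have h2 : a (2 * k) ≤ ‖ι‖ * ((‖T‖ * ‖S‖) ^ k * ‖y‖) := by
        calc a (2 * k) ≤ ‖ι‖ * ‖kreinSeq T S y (2 * k)‖ := ι.le_opNorm _
          _ ≤ ‖ι‖ * ((‖T‖ * ‖S‖) ^ k * ‖y‖) :=
              mul_le_mul_of_nonneg_left (kreinSeq_norm_le T S y k) (norm_nonneg _)
      have hCk : (C : ℝ) ^ (2 * k) = (‖T‖ * ‖S‖) ^ k := by
        rw [pow_mul, hCsq]
      calc a 1 ^ (2*k) * a 0 ≤ a 0 ^ (2*k) * a (2*k) := hR (2*k)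
        _ ≤ a 0 ^ (2*k) * (‖ι‖ * ((‖T‖ * ‖S‖) ^ k * ‖y‖)) := by
            refine mul_le_mul_of_nonneg_left h2 ?_; positivity
        _ = (a 0 * C) ^ (2*k) * (‖ι‖ * ‖y‖) := by
            rw [mul_pow (a 0) C, hCk]; ring
    -- conclude a 1 ≤ C * a 0
    by_contra hcon
    push_neg at hcon
    rw [← ha1, ← ha0] at hcon
    have hCa0 : 0 < a 0 * C := by
      rcases lt_or_eq_of_le hC0 with hC' | hC'
      · exact mul_pos ha0pos hC'
      · exfalso
        have := hmain 1
        rw [← hC'] at this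
        simp at this
        have hpos2 : 0 < a 1 ^ 2 * a 0 := by positivity
        nlinarith [hpos2, this]
    have hr : 1 < a 1 / (a 0 * C) := by
      rw [lt_div_iff₀ hCa0]
      nlinarith [hcon]
    obtain ⟨k, hk⟩ := (tendsto_pow_atTop_atTop_of_one_lt hr).eventually_gt_atTop
      ((‖ι‖ * ‖y‖) / a 0) |>.exists
    have hk2 : ((‖ι‖ * ‖y‖) / a 0) < (a 1 / (a 0 * C)) ^ (2 * k) := by
      calc ((‖ι‖ * ‖y‖) / a 0) < (a 1 / (a 0 * C)) ^ k := hk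
        _ ≤ (a 1 / (a 0 * C)) ^ (2 * k) :=
          pow_le_pow_right₀ (le_of_lt hr) (by omega)
    have hP : 0 < (a 0 * C) ^ (2 * k) := pow_pos hCa0 (2 * k)
    rw [div_pow, div_lt_div_iff₀ ha0pos hP] at hk2
    nlinarith [hmain k, hk2]
  -- Extension along the dense range of `ι`
  set p : Submodule ℂ H := LinearMap.range (ι.toLinearMap) with hp
  let e : Y ≃ₗ[ℂ] p := LinearEquiv.ofInjective ι.toLinearMap hinj
  have he : ∀ z : Y, ((e z : p) : H) = ι z := fun z =>
    LinearEquiv.ofInjective_apply ι.toLinearMap z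
  let f₀ : p →ₗ[ℂ] H := (ι.toLinearMap.comp T.toLinearMap).comp e.symm.toLinearMap
  have hbound : ∀ x : p, ‖f₀ x‖ ≤ C * ‖x‖ := by
    intro x
    have hx : ((x : p) : H) = ι (e.symm x) := by
      rw [← he (e.symm x), e.apply_symm_apply]
    have hnx : ‖x‖ = ‖ι (e.symm x)‖ := by rw [← hx]; rfl
    have : f₀ x = ι (T (e.symm x)) := rfl
    rw [this, hnx]
    exact key (e.symm x)
  let f : p →L[ℂ] H := f₀.mkContinuous C hbound
  have hfnorm : ‖f‖ ≤ C := f₀.mkContinuous_norm_le hC0 hbound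
  have hd : DenseRange (p.subtypeL) := by
    have hre : Set.range (p.subtypeL) = Set.range ι := by
      ext x
      constructor
      · rintro ⟨⟨z, hz⟩, rfl⟩
        obtain ⟨w, hw⟩ := hz
        exact ⟨w, hw⟩
      · rintro ⟨w, rfl⟩
        exact ⟨⟨ι w, ⟨w, rfl⟩⟩, rfl⟩
    show Dense (Set.range (p.subtypeL))
    rw [hre]
    exact hdense
  have h_e : ∀ x : p, ‖x‖ ≤ ((1 : NNReal) : ℝ) * ‖p.subtypeL x‖ := by
    intro x; simp
  refine ⟨f.extend p.subtypeL, ?_, ?_⟩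
  · intro y
    have h1 : ι y = p.subtypeL (e y) := (he y).symm
    rw [h1, ContinuousLinearMap.extend_eq f hd
      (ContinuousLinearMap.isUniformEmbedding_of_bound _ h_e).isUniformInducing]
    show f₀ (e y) = ι (T y)
    have : f₀ (e y) = ι (T (e.symm (e y))) := rfl
    rw [this, e.symm_apply_apply]
  · calc ‖f.extend p.subtypeL‖ ≤ (1 : NNReal) * ‖f‖ :=
        ContinuousLinearMap.opNorm_extend_le f hd h_e
      _ ≤ C := by rw [NNReal.coe_one, one_mul]; exact hfnorm
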